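/- Let Ω ⊂ ℝⁿ be open, a ∈ C¹_c(Ω), φ ∈ C²(Ω), with γ := inf_Ω |∇φ| > 0 and M := sup_Ω ‖∇²φ‖ < ∞. Then the function u = div(a ∇φ/|∇φ|²) satisfies ‖u‖_{L¹(Ω)} ≤ (1/γ) ‖∇a‖_{L¹(Ω)} + ((n+2)M/γ²) ‖a‖_{L¹(Ω)}. -/

import Mathlib

open MeasureTheory

/-- Divergence of a vector field on `ℝⁿ` (Euclidean space). -/
noncomputable def ediv {n : ℕ} (F : EuclideanSpace ℝ (Fin n) → EuclideanSpace ℝ (Fin n))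
    (x : EuclideanSpace ℝ (Fin n)) : ℝ :=
  ∑ i, fderiv ℝ F x (EuclideanSpace.single i 1) i

open scoped RealInnerProductSpace

lemma euclid_decomp {n : ℕ} (v : EuclideanSpace ℝ (Fin n)) :
    ∑ i, v i • EuclideanSpace.single i (1:ℝ) = v := by
  ext j
  rw [show (∑ i, v i • EuclideanSpace.single i (1:ℝ)) j
      = ∑ i, (v i • EuclideanSpace.single i (1:ℝ)) j from by rw [WithLp.ofLp_sum]; exact Finset.sum_apply j _ _]
  simp [EuclideanSpace.single_apply]

lemma clm_sum_eq {n : ℕ} (L : EuclideanSpace ℝ (Fin n) →L[ℝ] ℝ)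
    (v : EuclideanSpace ℝ (Fin n)) :
    ∑ i, L (EuclideanSpace.single i 1) * v i = L v := by
  have : ∀ i, L (EuclideanSpace.single i 1) * v i = L (v i • EuclideanSpace.single i (1:ℝ)) := by
    intro i; rw [L.map_smul]; simp [mul_comm]
  rw [Finset.sum_congr rfl fun i _ => this i, ← map_sum, euclid_decomp]

lemma abs_comp_le_norm {n : ℕ} (v : EuclideanSpace ℝ (Fin n)) (i : Fin n) :
    |v i| ≤ ‖v‖ := by
  have h := abs_real_inner_le_norm (EuclideanSpace.single i (1:ℝ)) v
  rw [EuclideanSpace.inner_single_left] at h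
  simpa [EuclideanSpace.norm_single] using h

lemma pointwise_bound {n : ℕ} (Ω : Set (EuclideanSpace ℝ (Fin n))) (hΩ : IsOpen Ω)
    (a : EuclideanSpace ℝ (Fin n) → ℝ) (ha : ContDiff ℝ 1 a)
    (φ : EuclideanSpace ℝ (Fin n) → ℝ) (hφ : ContDiffOn ℝ 2 φ Ω)
    (γ M : ℝ) (hγ : 0 < γ)
    (hlow : ∀ x ∈ Ω, γ ≤ ‖gradient φ x‖)
    (hHess : ∀ x ∈ Ω, ‖fderiv ℝ (gradient φ) x‖ ≤ M)
    (x : EuclideanSpace ℝ (Fin n)) (hx : x ∈ Ω) :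
    |ediv (fun y => a y • ((‖gradient φ y‖ ^ 2)⁻¹ • gradient φ y)) x| ≤
      (1 / γ) * ‖gradient a x‖ + ((n + 2) * M / γ ^ 2) * |a x| := by
  set G := gradient φ with hGdef
  have hM : 0 ≤ M := le_trans (norm_nonneg _) (hHess x hx)
  have hGx : ContDiffAt ℝ 1 G x := by
    have h2 : ContDiffAt ℝ 2 φ x := hφ.contDiffAt (hΩ.mem_nhds hx)
    have h1 : ContDiffAt ℝ 1 (fderiv ℝ φ) x := h2.fderiv_right (by norm_num)
    exact ((InnerProductSpace.toDual ℝ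
      (EuclideanSpace ℝ (Fin n))).symm.toContinuousLinearEquiv.toContinuousLinearMap.contDiff).comp_contDiffAt
      x h1
  have hGd : HasFDerivAt G (fderiv ℝ G x) x :=
    (hGx.differentiableAt one_ne_zero).hasFDerivAt
  set H := fderiv ℝ G x with hHdef
  have hHM : ‖H‖ ≤ M := hHess x hx
  set Gx := G x with hGx'
  have hγG : γ ≤ ‖Gx‖ := hlow x hx
  have hGpos : 0 < ‖Gx‖ := lt_of_lt_of_le hγ hγG
  set g : ℝ := ‖Gx‖ ^ 2 with hgdef
  have hgpos : 0 < g := by positivity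
  have hgγ : γ ^ 2 ≤ g := pow_le_pow_left₀ hγ.le hγG 2
  have hgne : g ≠ 0 := ne_of_gt hgpos
  -- derivatives
  have hq : HasFDerivAt (fun y => ‖G y‖ ^ 2)
      ((fderivInnerCLM ℝ (Gx, Gx)).comp (H.prod H)) x := by
    have h := hGd.inner ℝ hGd
    simp only [real_inner_self_eq_norm_sq] at h
    exact h
  have hinv : HasFDerivAt (fun y => (‖G y‖ ^ 2)⁻¹)
      ((ContinuousLinearMap.smulRight (1 : ℝ →L[ℝ] ℝ) (-(g ^ 2)⁻¹)).comp
        ((fderivInnerCLM ℝ (Gx, Gx)).comp (H.prod H))) x :=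
    (hasFDerivAt_inv hgne).comp x hq
  have hV : HasFDerivAt (fun y => (‖G y‖ ^ 2)⁻¹ • G y)
      ((g⁻¹ : ℝ) • H + (((ContinuousLinearMap.smulRight (1 : ℝ →L[ℝ] ℝ) (-(g ^ 2)⁻¹)).comp
        ((fderivInnerCLM ℝ (Gx, Gx)).comp (H.prod H)))).smulRight Gx) x := hinv.smul hGd
  have hF : HasFDerivAt (fun y => a y • ((‖G y‖ ^ 2)⁻¹ • G y))
      (a x • ((g⁻¹ : ℝ) • H + (((ContinuousLinearMap.smulRight (1 : ℝ →L[ℝ] ℝ) (-(g ^ 2)⁻¹)).comp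
          ((fderivInnerCLM ℝ (Gx, Gx)).comp (H.prod H)))).smulRight Gx)
        + (fderiv ℝ a x).smulRight ((g⁻¹ : ℝ) • Gx)) x :=
    (ha.differentiable one_ne_zero x).hasFDerivAt.smul hV
  have hfd := hF.fderiv
  rw [ediv, hfd]
  -- pointwise summand
  have key : ∀ i : Fin n,
      (a x • ((g⁻¹ : ℝ) • H + (((ContinuousLinearMap.smulRight (1 : ℝ →L[ℝ] ℝ) (-(g ^ 2)⁻¹)).comp
          ((fderivInnerCLM ℝ (Gx, Gx)).comp (H.prod H)))).smulRight Gx)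
        + (fderiv ℝ a x).smulRight ((g⁻¹ : ℝ) • Gx)) (EuclideanSpace.single i 1) i
      = fderiv ℝ a x (EuclideanSpace.single i 1) * (g⁻¹ * Gx i)
        + a x * g⁻¹ * (H (EuclideanSpace.single i 1) i)
        - a x * (g ^ 2)⁻¹ * 2 *
            (((innerSL ℝ Gx).comp H) (EuclideanSpace.single i 1) * Gx i) := by
    intro i
    simp only [ContinuousLinearMap.add_apply, ContinuousLinearMap.smul_apply,
      ContinuousLinearMap.smulRight_apply, ContinuousLinearMap.comp_apply,
      ContinuousLinearMap.prod_apply, fderivInnerCLM_apply, ContinuousLinearMap.one_apply,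
      PiLp.add_apply, PiLp.smul_apply, smul_eq_mul, innerSL_apply_apply]
    rw [real_inner_comm (H (EuclideanSpace.single i 1)) Gx]
    ring
  rw [Finset.sum_congr rfl fun i _ => key i]
  rw [Finset.sum_sub_distrib, Finset.sum_add_distrib]
  have S1 : ∑ i, fderiv ℝ a x (EuclideanSpace.single i 1) * (g⁻¹ * Gx i)
      = g⁻¹ * fderiv ℝ a x Gx := by
    rw [← clm_sum_eq (fderiv ℝ a x) Gx, Finset.mul_sum]
    exact Finset.sum_congr rfl fun i _ => by ring
  have S3 : ∑ i, a x * (g ^ 2)⁻¹ * 2 *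
      (((innerSL ℝ Gx).comp H) (EuclideanSpace.single i 1) * Gx i)
      = a x * (g ^ 2)⁻¹ * 2 * ⟪Gx, H Gx⟫ := by
    rw [← Finset.mul_sum, clm_sum_eq ((innerSL ℝ Gx).comp H) Gx]
    rw [ContinuousLinearMap.comp_apply, innerSL_apply_apply]
  rw [S1, S3]
  -- now bounds
  have hda : ‖fderiv ℝ a x‖ = ‖gradient a x‖ := by
    rw [gradient]
    rw [LinearIsometryEquiv.norm_map]
  have b1 : |g⁻¹ * fderiv ℝ a x Gx| ≤ (1 / γ) * ‖gradient a x‖ := by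
    rw [abs_mul, abs_of_pos (inv_pos.mpr hgpos)]
    have h1 : |fderiv ℝ a x Gx| ≤ ‖gradient a x‖ * ‖Gx‖ := by
      rw [← hda]
      exact (fderiv ℝ a x).le_opNorm Gx
    calc g⁻¹ * |fderiv ℝ a x Gx| ≤ g⁻¹ * (‖gradient a x‖ * ‖Gx‖) := by
          exact mul_le_mul_of_nonneg_left h1 (inv_pos.mpr hgpos).le
      _ = ‖gradient a x‖ / ‖Gx‖ := by
          rw [hgdef]; field_simp
      _ ≤ ‖gradient a x‖ / γ := by
          apply div_le_div_of_nonneg_left (norm_nonneg _) hγ hγG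
      _ = (1 / γ) * ‖gradient a x‖ := by ring
  have bT : |∑ i, a x * g⁻¹ * H (EuclideanSpace.single i 1) i| ≤ |a x| * (n * M / γ ^ 2) := by
    calc |∑ i, a x * g⁻¹ * H (EuclideanSpace.single i 1) i|
        ≤ ∑ i, |a x * g⁻¹ * H (EuclideanSpace.single i 1) i| := Finset.abs_sum_le_sum_abs _ _
      _ ≤ ∑ _i : Fin n, |a x| * g⁻¹ * M := by
          apply Finset.sum_le_sum
          intro i _
          rw [abs_mul, abs_mul, abs_of_pos (inv_pos.mpr hgpos)]
          apply mul_le_mul_of_nonneg_left _ (by positivity)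
          calc |H (EuclideanSpace.single i 1) i| ≤ ‖H (EuclideanSpace.single i 1)‖ :=
                abs_comp_le_norm _ i
            _ ≤ ‖H‖ * ‖EuclideanSpace.single i (1:ℝ)‖ := H.le_opNorm _
            _ ≤ M := by rw [EuclideanSpace.norm_single, norm_one, mul_one]; exact hHM
      _ = n * (|a x| * g⁻¹ * M) := by simp [Finset.sum_const, mul_comm]
      _ ≤ |a x| * (n * M / γ ^ 2) := by
          have hinv2 : g⁻¹ ≤ (γ ^ 2)⁻¹ := inv_anti₀ (by positivity) hgγ
          calc (n:ℝ) * (|a x| * g⁻¹ * M) ≤ (n:ℝ) * (|a x| * (γ^2)⁻¹ * M) := by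
                apply mul_le_mul_of_nonneg_left _ (Nat.cast_nonneg n)
                apply mul_le_mul_of_nonneg_right _ hM
                exact mul_le_mul_of_nonneg_left hinv2 (abs_nonneg _)
            _ = |a x| * (n * M / γ ^ 2) := by ring
  have b3 : |a x * (g ^ 2)⁻¹ * 2 * ⟪Gx, H Gx⟫| ≤ |a x| * (2 * M / γ ^ 2) := by
    have hin : |⟪Gx, H Gx⟫| ≤ M * g := by
      calc |⟪Gx, H Gx⟫| ≤ ‖Gx‖ * ‖H Gx‖ := abs_real_inner_le_norm _ _
        _ ≤ ‖Gx‖ * (‖H‖ * ‖Gx‖) := by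
            exact mul_le_mul_of_nonneg_left (H.le_opNorm _) (norm_nonneg _)
        _ ≤ ‖Gx‖ * (M * ‖Gx‖) := by
            apply mul_le_mul_of_nonneg_left _ (norm_nonneg _)
            exact mul_le_mul_of_nonneg_right hHM (norm_nonneg _)
        _ = M * g := by rw [hgdef]; ring
    calc |a x * (g ^ 2)⁻¹ * 2 * ⟪Gx, H Gx⟫|
        = |a x| * (g ^ 2)⁻¹ * 2 * |⟪Gx, H Gx⟫| := by
          rw [abs_mul, abs_mul, abs_mul]
          rw [abs_of_pos (inv_pos.mpr (by positivity : (0:ℝ) < g ^ 2))]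
          norm_num
      _ ≤ |a x| * (g ^ 2)⁻¹ * 2 * (M * g) := by
          apply mul_le_mul_of_nonneg_left hin (by positivity)
      _ = |a x| * (2 * M * g⁻¹) := by field_simp
      _ ≤ |a x| * (2 * M / γ ^ 2) := by
          apply mul_le_mul_of_nonneg_left _ (abs_nonneg _)
          rw [div_eq_mul_inv]
          apply mul_le_mul_of_nonneg_left _ (by positivity)
          exact inv_anti₀ (by positivity) hgγ
  calc |g⁻¹ * fderiv ℝ a x Gx + ∑ i, a x * g⁻¹ * H (EuclideanSpace.single i 1) i
        - a x * (g ^ 2)⁻¹ * 2 * ⟪Gx, H Gx⟫|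
      ≤ |g⁻¹ * fderiv ℝ a x Gx + ∑ i, a x * g⁻¹ * H (EuclideanSpace.single i 1) i|
        + |a x * (g ^ 2)⁻¹ * 2 * ⟪Gx, H Gx⟫| := abs_sub _ _
    _ ≤ |g⁻¹ * fderiv ℝ a x Gx| + |∑ i, a x * g⁻¹ * H (EuclideanSpace.single i 1) i|
        + |a x * (g ^ 2)⁻¹ * 2 * ⟪Gx, H Gx⟫| :=
        add_le_add_left (abs_add_le _ _) _
    _ ≤ (1/γ) * ‖gradient a x‖ + |a x| * (n * M / γ ^ 2) + |a x| * (2 * M / γ ^ 2) := by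
        gcongr
    _ = (1/γ) * ‖gradient a x‖ + ((n + 2) * M / γ ^ 2) * |a x| := by ring

theorem stmt4 {n : ℕ} (Ω : Set (EuclideanSpace ℝ (Fin n))) (hΩ : IsOpen Ω)
    (a : EuclideanSpace ℝ (Fin n) → ℝ) (ha : ContDiff ℝ 1 a)
    (hac : HasCompactSupport a) (has : tsupport a ⊆ Ω)
    (φ : EuclideanSpace ℝ (Fin n) → ℝ) (hφ : ContDiffOn ℝ 2 φ Ω)
    (γ M : ℝ) (hγ : 0 < γ)
    (hlow : ∀ x ∈ Ω, γ ≤ ‖gradient φ x‖)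
    (hHess : ∀ x ∈ Ω, ‖fderiv ℝ (gradient φ) x‖ ≤ M)
    (u : EuclideanSpace ℝ (Fin n) → ℝ)
    (hu : ∀ x ∈ Ω, u x =
      ediv (fun y => a y • ((‖gradient φ y‖ ^ 2)⁻¹ • gradient φ y)) x) :
    ∫ x in Ω, |u x| ≤
      (1 / γ) * (∫ x in Ω, ‖gradient a x‖) +
        ((n + 2) * M / γ ^ 2) * (∫ x in Ω, |a x|) := by
  rcases Set.eq_empty_or_nonempty Ω with hemp | ⟨x₀, hx₀⟩
  · subst hemp
    simp
  have hM : 0 ≤ M := le_trans (norm_nonneg _) (hHess x₀ hx₀)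
  set F : EuclideanSpace ℝ (Fin n) → EuclideanSpace ℝ (Fin n) :=
    fun y => a y • ((‖gradient φ y‖ ^ 2)⁻¹ • gradient φ y) with hFdef
  -- F is C¹ on Ω
  have hG : ContDiffOn ℝ 1 (gradient φ) Ω := by
    have h1 : ContDiffOn ℝ 1 (fderiv ℝ φ) Ω := hφ.fderiv_of_isOpen hΩ (by norm_num)
    exact ContDiffOn.continuousLinearMap_comp
      ((InnerProductSpace.toDual ℝ
        (EuclideanSpace ℝ (Fin n))).symm.toContinuousLinearEquiv.toContinuousLinearMap) h1
  have hne : ∀ y ∈ Ω, ‖gradient φ y‖ ^ 2 ≠ 0 := by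
    intro y hy
    have := lt_of_lt_of_le hγ (hlow y hy)
    positivity
  have hFc : ContDiffOn ℝ 1 F Ω :=
    (ha.contDiffOn).smul (((hG.norm_sq ℝ).inv hne).smul hG)
  have hfc : ContinuousOn (fderiv ℝ F) Ω := hFc.continuousOn_fderiv_of_isOpen hΩ le_rfl
  have hcont : ContinuousOn (fun x => ediv F x) Ω := by
    apply continuousOn_finset_sum
    intro i _
    exact (EuclideanSpace.proj i).continuous.comp_continuousOn
      (hfc.clm_apply continuousOn_const)
  -- integrability
  have hfa : Continuous (fderiv ℝ a) := ha.continuous_fderiv one_ne_zero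
  have hga : Continuous (fun x => ‖gradient a x‖) :=
    ((InnerProductSpace.toDual ℝ
      (EuclideanSpace ℝ (Fin n))).symm.continuous.comp hfa).norm
  have hgsupp : HasCompactSupport (fun x => ‖gradient a x‖) :=
    ((hac.fderiv ℝ).comp_left (by simp)).norm
  have hint1 : IntegrableOn (fun x => ‖gradient a x‖) Ω :=
    (hga.integrable_of_hasCompactSupport hgsupp).integrableOn
  have hint2 : IntegrableOn (fun x => |a x|) Ω :=
    (((ha.continuous).abs).integrable_of_hasCompactSupport hac.abs).integrableOn
  set B : EuclideanSpace ℝ (Fin n) → ℝ :=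
    fun x => (1 / γ) * ‖gradient a x‖ + ((n + 2) * M / γ ^ 2) * |a x| with hBdef
  have hintB : IntegrableOn B Ω := (hint1.const_mul _).add (hint2.const_mul _)
  have hbd : ∀ x ∈ Ω, |ediv F x| ≤ B x := fun x hx =>
    pointwise_bound Ω hΩ a ha φ hφ γ M hγ hlow hHess x hx
  have hintu : IntegrableOn (fun x => |ediv F x|) Ω := by
    apply Integrable.mono' hintB (hcont.abs.aestronglyMeasurable hΩ.measurableSet)
    rw [ae_restrict_iff' hΩ.measurableSet]
    filter_upwards with x hx
    rw [Real.norm_eq_abs, abs_abs]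
    exact hbd x hx
  calc ∫ x in Ω, |u x| = ∫ x in Ω, |ediv F x| :=
        setIntegral_congr_fun hΩ.measurableSet (fun x hx => by rw [hu x hx])
    _ ≤ ∫ x in Ω, B x := setIntegral_mono_on hintu hintB hΩ.measurableSet hbd
    _ = (1 / γ) * (∫ x in Ω, ‖gradient a x‖) + ((n + 2) * M / γ ^ 2) * (∫ x in Ω, |a x|) := by
        rw [hBdef]
        rw [integral_add (hint1.const_mul _) (hint2.const_mul _)]
        rw [integral_const_mul, integral_const_mul]
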